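/- Let P and Q be orthogonal projections on a complex Hilbert space H. Then the kernel of the operator P + Q − 1 is the (orthogonal) direct sum of ker(Q) ∩ range(P) and ker(P) ∩ range(Q); that is, as submodules of H, ker(P + Q − 1) = (ker(Q) ⊓ range(P)) ⊔ (ker(P) ⊓ range(Q)). -/

import Mathlib

/-- Let `P` and `Q` be orthogonal projections on a complex Hilbert space `H`.  Then
`ker (P + Q - 1) = (ker Q ⊓ range P) ⊔ (ker P ⊓ range Q)`. -/
theorem ker_add_sub_one_eq_sup {H : Type*} [NormedAddCommGroup H]
    [InnerProductSpace ℂ H] [CompleteSpace H] (P Q : H →L[ℂ] H)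
    (hP : IsIdempotentElem P) (hPs : IsSelfAdjoint P)
    (hQ : IsIdempotentElem Q) (hQs : IsSelfAdjoint Q) :
    LinearMap.ker ((P + Q - 1 : H →L[ℂ] H) : H →ₗ[ℂ] H) =
      (LinearMap.ker (Q : H →ₗ[ℂ] H) ⊓ LinearMap.range (P : H →ₗ[ℂ] H)) ⊔
        (LinearMap.ker (P : H →ₗ[ℂ] H) ⊓ LinearMap.range (Q : H →ₗ[ℂ] H)) := by
  have hPP : ∀ x, P (P x) = P x := fun x =>
    congrFun (congrArg DFunLike.coe hP) x
  have hQQ : ∀ x, Q (Q x) = Q x := fun x =>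
    congrFun (congrArg DFunLike.coe hQ) x
  apply le_antisymm
  · intro x hx
    have h0 : (P + Q - 1) x = 0 := hx
    have h : P x + Q x = x := by
      simpa [sub_eq_zero] using h0
    have hPQ : P (Q x) = 0 := by
      have h1 := congrArg P h
      rw [map_add, hPP] at h1
      exact add_eq_left.mp h1
    have hQP : Q (P x) = 0 := by
      have h1 := congrArg Q h
      rw [map_add, hQQ] at h1
      exact add_eq_right.mp h1
    rw [← h]
    exact Submodule.add_mem_sup ⟨hQP, ⟨x, rfl⟩⟩ ⟨hPQ, ⟨x, rfl⟩⟩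
  · refine sup_le ?_ ?_
    · rintro x ⟨hk, y, rfl⟩
      have hk' : Q (P y) = 0 := hk
      show (P + Q - 1) (P y) = 0
      simp [hPP, hk']
    · rintro x ⟨hk, y, rfl⟩
      have hk' : P (Q y) = 0 := hk
      show (P + Q - 1) (Q y) = 0
      simp [hQQ, hk']
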